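/- Let r, γ, β > 0 and let K be a compact subset of a real Banach space X, with C₀(K) := sup_{f∈K}‖f‖_X. Then there exists a constant c depending only on r, β, γ and C₀(K) such that for all integers n ≥ 3, ε_{⌈c·n·ln n⌉}(K)_X ≤ (n+1)^{-r} · sup_{m≥0}(m+1)^r δ̃_{m,γ,β}(K)_X (the inequality being trivial if the supremum is infinite). -/

import Mathlib

open Metric

def IsNorm {n : ℕ} (nrm : (Fin n → ℝ) → ℝ) : Prop :=
  (∀ x, 0 ≤ nrm x) ∧
  (∀ x, nrm x = 0 → x = 0) ∧
  (∀ (c : ℝ) (x), nrm (c • x) = |c| * nrm x) ∧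
  (∀ x y, nrm (x + y) ≤ nrm x + nrm y)

noncomputable def stableWidth (X : Type*) [NormedAddCommGroup X]
    (K : Set X) (n : ℕ) (γ : ℝ) : ℝ :=
  sInf { d | ∃ (nrm : (Fin n → ℝ) → ℝ) (a : X → Fin n → ℝ) (M : (Fin n → ℝ) → X),
    IsNorm nrm ∧
    (∀ f ∈ K, ∀ g ∈ K, nrm (a f - a g) ≤ γ * ‖f - g‖) ∧
    (∀ x y, ‖M x - M y‖ ≤ γ * nrm (x - y)) ∧
    d = ⨆ f : K, ‖(f : X) - M (a (f : X))‖ }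

noncomputable def modStableWidth (X : Type*) [NormedAddCommGroup X]
    (K : Set X) (n : ℕ) (γ : ℝ) : ℝ :=
  sInf { d | ∃ (nrm : (Fin n → ℝ) → ℝ) (a : X → Fin n → ℝ) (M : (Fin n → ℝ) → X),
    IsNorm nrm ∧
    (∀ f g : X, nrm (a f - a g) ≤ γ * ‖f - g‖) ∧
    (∀ x y, ‖M x - M y‖ ≤ γ * nrm (x - y)) ∧
    d = ⨆ f : K, ‖(f : X) - M (a (f : X))‖ }

noncomputable def entropyNumber (X : Type*) [NormedAddCommGroup X] (K : Set X) (n : ℕ) : ℝ :=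
  sInf { ε : ℝ | 0 < ε ∧ ∃ T : Finset X, T.card ≤ 2 ^ n ∧ K ⊆ ⋃ c ∈ T, closedBall c ε }

/-- The bounded stable manifold width δ̃_{n,γ,β}(K)_X: infimum of sup_{f∈K}‖f − M(a(f))‖
over norms ‖·‖_Y on ℝⁿ and pairs (a,M) with ‖a(f)‖_Y ≤ γ‖f‖ on K and
‖M(x)−M(y)‖ ≤ γ‖x−y‖_Y^β + E_{M∘a}(K). -/
noncomputable def boundedStableWidth (X : Type*) [NormedAddCommGroup X]
    (K : Set X) (n : ℕ) (γ β : ℝ) : ℝ :=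
  sInf { d | ∃ (nrm : (Fin n → ℝ) → ℝ) (a : X → Fin n → ℝ) (M : (Fin n → ℝ) → X),
    IsNorm nrm ∧
    (∀ f ∈ K, nrm (a f) ≤ γ * ‖f‖) ∧
    (∀ x y, ‖M x - M y‖ ≤ γ * nrm (x - y) ^ β + ⨆ f : K, ‖(f : X) - M (a (f : X))‖) ∧
    d = ⨆ f : K, ‖(f : X) - M (a (f : X))‖ }


open MeasureTheory Pointwise ENNReal

namespace Stmt11Aux


variable {m : ℕ} {nrm : (Fin m → ℝ) → ℝ}

theorem nrm_zero (h : IsNorm nrm) : nrm 0 = 0 := by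
  have := h.2.2.1 0 0
  simpa using this

theorem nrm_neg (h : IsNorm nrm) (x : Fin m → ℝ) : nrm (-x) = nrm x := by
  have := h.2.2.1 (-1) x
  simpa using this

theorem nrm_sub_le (h : IsNorm nrm) (x y z : Fin m → ℝ) :
    nrm (x - z) ≤ nrm (x - y) + nrm (y - z) := by
  have := h.2.2.2 (x - y) (y - z)
  simpa using this

theorem nrm_sub_symm (h : IsNorm nrm) (x y : Fin m → ℝ) : nrm (x - y) = nrm (y - x) := by
  rw [← nrm_neg h (y - x)]; ring_nf

/-- upper equivalence: nrm ≤ C₁ * sup norm, with C₁ > 0 -/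
theorem exists_upper (h : IsNorm nrm) : ∃ C₁ : ℝ, 0 < C₁ ∧ ∀ x, nrm x ≤ C₁ * ‖x‖ := by
  have hsum0 : 0 ≤ ∑ i : Fin m, nrm (Pi.single i 1) := Finset.sum_nonneg fun i _ => h.1 _
  refine ⟨(∑ i : Fin m, nrm (Pi.single i 1)) + 1, by linarith, fun x => ?_⟩
  have hx : x = ∑ i : Fin m, x i • (Pi.single i (1:ℝ) : Fin m → ℝ) := by
    funext j
    simp [Finset.sum_apply, Pi.single_apply]
  have h1 : nrm x ≤ ∑ i : Fin m, nrm (x i • (Pi.single i (1:ℝ) : Fin m → ℝ)) := by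
    calc nrm x = nrm (∑ i : Fin m, x i • (Pi.single i (1:ℝ) : Fin m → ℝ)) := by rw [← hx]
      _ ≤ _ := Finset.le_sum_of_subadditive nrm (nrm_zero h).le h.2.2.2 _ _
  have h2 : ∀ i : Fin m, nrm (x i • (Pi.single i (1:ℝ) : Fin m → ℝ)) ≤ ‖x‖ * nrm (Pi.single i 1) := by
    intro i
    rw [h.2.2.1]
    gcongr
    · exact h.1 _
    · exact norm_le_pi_norm x i |>.trans_eq' (by simp [Real.norm_eq_abs])
  calc nrm x ≤ ∑ i : Fin m, ‖x‖ * nrm (Pi.single i 1) := h1.trans (Finset.sum_le_sum fun i _ => h2 i)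
    _ = (∑ i : Fin m, nrm (Pi.single i 1)) * ‖x‖ := by rw [← Finset.mul_sum, mul_comm]
    _ ≤ ((∑ i : Fin m, nrm (Pi.single i 1)) + 1) * ‖x‖ := by
        have : (0:ℝ) ≤ ‖x‖ := norm_nonneg x
        nlinarith

theorem nrm_continuous (h : IsNorm nrm) : Continuous nrm := by
  obtain ⟨C₁, hC₁, hup⟩ := exists_upper h
  have : LipschitzWith (Real.toNNReal C₁) nrm := by
    refine LipschitzWith.of_dist_le_mul fun x y => ?_
    rw [Real.dist_eq, dist_eq_norm]
    have h1 : nrm x - nrm y ≤ nrm (x - y) := by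
      have := h.2.2.2 (x - y) y; simp at this; linarith
    have h2 : nrm y - nrm x ≤ nrm (x - y) := by
      have := h.2.2.2 (y - x) x
      simp at this
      have := nrm_sub_symm h x y
      linarith
    have h3 := hup (x - y)
    rw [abs_le]
    constructor <;> simp [Real.coe_toNNReal _ hC₁.le] <;> linarith
  exact this.continuous

/-- lower equivalence for m ≥ 1 -/
theorem exists_lower (hm : 0 < m) (h : IsNorm nrm) : ∃ C₂ : ℝ, 0 < C₂ ∧ ∀ x, ‖x‖ ≤ C₂ * nrm x := by
  have hnt : Nontrivial (Fin m → ℝ) := by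
    refine ⟨0, Pi.single ⟨0, hm⟩ 1, fun hc => ?_⟩
    have := congrFun hc ⟨0, hm⟩
    simp at this
  have hsc : IsCompact (sphere (0 : Fin m → ℝ) 1) := isCompact_sphere 0 1
  have hsn : (sphere (0 : Fin m → ℝ) 1).Nonempty := NormedSpace.sphere_nonempty.mpr zero_le_one
  obtain ⟨x₀, hx₀, hmin⟩ := hsc.exists_isMinOn hsn (nrm_continuous h).continuousOn
  have hx₀norm : ‖x₀‖ = 1 := by simpa using hx₀
  have hδ : 0 < nrm x₀ := by
    rcases lt_or_eq_of_le (h.1 x₀) with h' | h'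
    · exact h'
    · exfalso
      have := h.2.1 x₀ h'.symm
      rw [this] at hx₀norm; simp at hx₀norm
  refine ⟨(nrm x₀)⁻¹, by positivity, fun x => ?_⟩
  rcases eq_or_ne x 0 with rfl | hx
  · simp [nrm_zero h]
  · have hxn : 0 < ‖x‖ := norm_pos_iff.mpr hx
    have hmem : ‖x‖⁻¹ • x ∈ sphere (0 : Fin m → ℝ) 1 := by
      simp [norm_smul, abs_of_pos (inv_pos.mpr hxn), inv_mul_cancel₀ hxn.ne']
    have := hmin hmem
    simp only [Set.mem_setOf_eq] at this
    have heq : nrm (‖x‖⁻¹ • x) = ‖x‖⁻¹ * nrm x := by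
      rw [h.2.2.1]; rw [abs_of_pos (inv_pos.mpr hxn)]
    rw [heq] at this
    have h1 : ‖x‖ * nrm x₀ ≤ nrm x := by
      have h2 := mul_le_mul_of_nonneg_left this hxn.le
      rwa [mul_inv_cancel_left₀ hxn.ne'] at h2
    calc ‖x‖ = (nrm x₀)⁻¹ * (nrm x₀ * ‖x‖) := by field_simp
      _ ≤ (nrm x₀)⁻¹ * nrm x := by
          apply mul_le_mul_of_nonneg_left _ (inv_nonneg.mpr hδ.le)
          linarith [h1]



variable {m : ℕ} {nrm : (Fin m → ℝ) → ℝ}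


/-- ball in nrm -/
def nball (nrm : (Fin m → ℝ) → ℝ) (t : ℝ) : Set (Fin m → ℝ) := {x | nrm x ≤ t}

theorem nball_closed (h : IsNorm nrm) (t : ℝ) : IsClosed (nball nrm t) :=
  isClosed_le (nrm_continuous h) continuous_const

theorem nball_meas (h : IsNorm nrm) (t : ℝ) : MeasurableSet (nball nrm t) :=
  (nball_closed h t).measurableSet

theorem nball_vol (h : IsNorm nrm) {t : ℝ} (ht : 0 < t) :
    volume (nball nrm t) = ENNReal.ofReal (t ^ m) * volume (nball nrm 1) := by
  have hset : nball nrm t = t • nball nrm 1 := by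
    ext x
    simp only [nball, Set.mem_setOf_eq, Set.mem_smul_set]
    constructor
    · intro hx
      refine ⟨t⁻¹ • x, ?_, by rw [smul_smul, mul_inv_cancel₀ ht.ne', one_smul]⟩
      show nrm (t⁻¹ • x) ≤ 1
      rw [h.2.2.1, abs_of_pos (inv_pos.mpr ht)]
      rw [inv_mul_le_iff₀ ht]
      linarith
    · rintro ⟨y, hy, rfl⟩
      rw [h.2.2.1, abs_of_pos ht]
      calc t * nrm y ≤ t * 1 := by nlinarith [h.1 y]
        _ = t := mul_one t
  rw [hset, Measure.addHaar_smul]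
  congr 1
  rw [Module.finrank_fin_fun, abs_of_pos (pow_pos ht m)]

theorem nball_vol_pos (h : IsNorm nrm) {t : ℝ} (ht : 0 < t) : 0 < volume (nball nrm t) := by
  obtain ⟨C₁, hC₁, hup⟩ := exists_upper h
  have hsub : closedBall (0 : Fin m → ℝ) (t / C₁) ⊆ nball nrm t := by
    intro x hx
    simp only [mem_closedBall, dist_zero_right] at hx
    have := hup x
    simp only [nball, Set.mem_setOf_eq]
    calc nrm x ≤ C₁ * ‖x‖ := this
      _ ≤ C₁ * (t / C₁) := by nlinarith
      _ = t := by field_simp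
  calc (0:ℝ≥0∞) < volume (ball (0 : Fin m → ℝ) (t / C₁)) := measure_ball_pos volume 0 (by positivity)
    _ ≤ volume (nball nrm t) := measure_mono (ball_subset_closedBall.trans hsub)

theorem nball_vol_lt_top (hm : 0 < m) (h : IsNorm nrm) (t : ℝ) :
    volume (nball nrm t) < ⊤ := by
  obtain ⟨C₂, hC₂, hlow⟩ := exists_lower hm h
  rcases le_or_gt t 0 with ht | ht
  · have : nball nrm t ⊆ closedBall (0 : Fin m → ℝ) 0 := by
      intro x hx
      simp only [nball, Set.mem_setOf_eq] at hx
      simp only [mem_closedBall, dist_zero_right]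
      calc ‖x‖ ≤ C₂ * nrm x := hlow x
        _ ≤ 0 := by nlinarith [h.1 x]
    exact lt_of_le_of_lt (measure_mono this) (isCompact_closedBall _ _).measure_lt_top
  · have : nball nrm t ⊆ closedBall (0 : Fin m → ℝ) (C₂ * t) := by
      intro x hx
      simp only [nball, Set.mem_setOf_eq] at hx
      simp only [mem_closedBall, dist_zero_right]
      calc ‖x‖ ≤ C₂ * nrm x := hlow x
        _ ≤ C₂ * t := by nlinarith
    exact lt_of_le_of_lt (measure_mono this) (isCompact_closedBall _ _).measure_lt_top

/-- volume bound for separated finsets -/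
theorem sep_card_bound (hm : 0 < m) (h : IsNorm nrm) {R ε : ℝ} (hR : 0 < R) (hε : 0 < ε)
    (S : Finset (Fin m → ℝ)) (hSR : ∀ p ∈ S, nrm p ≤ R)
    (hSsep : ∀ p ∈ S, ∀ q ∈ S, p ≠ q → ε < nrm (p - q)) :
    (S.card : ℝ) ≤ (1 + 2 * R / ε) ^ m := by
  set B : (Fin m → ℝ) → Set (Fin m → ℝ) := fun p => {z | nrm (z - p) ≤ ε / 2} with hB
  have hBmeas : ∀ p, MeasurableSet (B p) := by
    intro p
    have : B p = (fun z => z - p) ⁻¹' nball nrm (ε/2) := rfl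
    rw [this]
    exact (nball_meas h _).preimage (measurable_id.sub measurable_const)
  have hBvol : ∀ p, volume (B p) = volume (nball nrm (ε/2)) := by
    intro p
    have : B p = (fun z => z + (-p)) ⁻¹' nball nrm (ε/2) := by
      ext z; simp [hB, nball, sub_eq_add_neg]
    rw [this, measure_preimage_add_right]
  have hdisj : (S : Set (Fin m → ℝ)).PairwiseDisjoint B := by
    intro p hp q hq hpq
    simp only [Function.onFun, Set.disjoint_left]
    intro z hz1 hz2
    simp only [hB, Set.mem_setOf_eq] at hz1 hz2
    have h1 : nrm (p - q) ≤ nrm (p - z) + nrm (z - q) := nrm_sub_le h p z q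
    rw [nrm_sub_symm h p z] at h1
    have := hSsep p (by exact_mod_cast hp) q (by exact_mod_cast hq) hpq
    linarith
  have hunion : (⋃ p ∈ S, B p) ⊆ nball nrm (R + ε/2) := by
    intro z hz
    simp only [Set.mem_iUnion] at hz
    obtain ⟨p, hp, hzp⟩ := hz
    simp only [hB, Set.mem_setOf_eq] at hzp
    simp only [nball, Set.mem_setOf_eq]
    have h1 : nrm z ≤ nrm (z - p) + nrm p := by
      have := h.2.2.2 (z - p) p; simpa using this
    have := hSR p hp
    linarith
  have hkey : (S.card : ℝ≥0∞) * volume (nball nrm (ε/2)) ≤ volume (nball nrm (R + ε/2)) := by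
    calc (S.card : ℝ≥0∞) * volume (nball nrm (ε/2))
        = ∑ p ∈ S, volume (B p) := by
          rw [Finset.sum_congr rfl fun p _ => hBvol p, Finset.sum_const, nsmul_eq_mul]
      _ = volume (⋃ p ∈ S, B p) := (measure_biUnion_finset hdisj fun p _ => hBmeas p).symm
      _ ≤ volume (nball nrm (R + ε/2)) := measure_mono hunion
  rw [nball_vol h (show (0:ℝ) < ε/2 by positivity)] at hkey
  rw [nball_vol h (show (0:ℝ) < R + ε/2 by positivity)] at hkey
  set v₁ := volume (nball nrm 1) with hv₁
  have hv₁0 : v₁ ≠ 0 := (nball_vol_pos h one_pos).ne'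
  have hv₁top : v₁ ≠ ⊤ := (nball_vol_lt_top hm h 1).ne
  rw [← mul_assoc] at hkey
  have hkey2 : (S.card : ℝ≥0∞) * ENNReal.ofReal ((ε/2) ^ m) ≤ ENNReal.ofReal ((R + ε/2) ^ m) :=
    (ENNReal.mul_le_mul_iff_left hv₁0 hv₁top).mp hkey
  have hcast : (S.card : ℝ≥0∞) * ENNReal.ofReal ((ε/2) ^ m)
      = ENNReal.ofReal ((S.card : ℝ) * (ε/2) ^ m) := by
    rw [ENNReal.ofReal_mul (by positivity)]
    congr 1
    simp [ENNReal.ofReal_natCast]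
  rw [hcast] at hkey2
  have hreal : (S.card : ℝ) * (ε/2) ^ m ≤ (R + ε/2) ^ m := by
    have := (ENNReal.ofReal_le_ofReal_iff (by positivity)).mp hkey2
    exact this
  have hpow : ((R + ε/2) / (ε/2)) ^ m = (1 + 2 * R / ε) ^ m := by
    congr 1
    field_simp
    ring
  have hd : (0:ℝ) < (ε/2)^m := by positivity
  calc (S.card : ℝ) ≤ ((R + ε/2) / (ε/2)) ^ m := by
        rw [div_pow, le_div_iff₀ hd]
        linarith [hreal]
    _ = (1 + 2 * R / ε) ^ m := hpow

/-- existence of an ε-net of the nrm-ball of radius R, of cardinality ≤ (1+2R/ε)^m -/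
theorem exists_net (hm : 0 < m) (h : IsNorm nrm) {R ε : ℝ} (hR : 0 < R) (hε : 0 < ε) :
    ∃ P : Finset (Fin m → ℝ), (P.card : ℝ) ≤ (1 + 2 * R / ε) ^ m ∧
      ∀ x, nrm x ≤ R → ∃ p ∈ P, nrm (x - p) ≤ ε := by
  set Good : Finset (Fin m → ℝ) → Prop := fun S =>
    (∀ p ∈ S, nrm p ≤ R) ∧ (∀ p ∈ S, ∀ q ∈ S, p ≠ q → ε < nrm (p - q)) with hGood
  set cards : Set ℕ := {k | ∃ S, Good S ∧ S.card = k} with hcards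
  have hne : cards.Nonempty := ⟨0, ∅, ⟨by simp, by simp⟩, rfl⟩
  have hbdd : BddAbove cards := by
    refine ⟨⌊(1 + 2 * R / ε) ^ m⌋₊, ?_⟩
    rintro k ⟨S, hS, rfl⟩
    exact Nat.le_floor (sep_card_bound hm h hR hε S hS.1 hS.2)
  obtain ⟨S, hSGood, hScard⟩ := Nat.sSup_mem hne hbdd
  refine ⟨S, ?_, ?_⟩
  · exact sep_card_bound hm h hR hε S hSGood.1 hSGood.2
  · intro x hx
    by_contra hcon
    push_neg at hcon
    have hxS : x ∉ S := fun hxS => by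
      have := hcon x hxS
      rw [sub_self, nrm_zero h] at this
      linarith
    have hGood' : Good (insert x S) := by
      constructor
      · intro p hp
        rcases Finset.mem_insert.mp hp with rfl | hp
        · exact hx
        · exact hSGood.1 p hp
      · intro p hp q hq hpq
        rcases Finset.mem_insert.mp hp with rfl | hp'
        · rcases Finset.mem_insert.mp hq with h' | hq'
          · exact absurd h'.symm hpq
          · exact hcon q hq'
        · rcases Finset.mem_insert.mp hq with h' | hq'
          · subst h'
            rw [nrm_sub_symm h]
            exact hcon p hp'
          · exact hSGood.2 p hp' q hq' hpq
    have : (insert x S).card ∈ cards := ⟨_, hGood', rfl⟩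
    have hle := le_csSup hbdd this
    rw [Finset.card_insert_of_notMem hxS, hScard] at hle
    omega

end Stmt11Aux

open MeasureTheory Pointwise ENNReal

namespace Stmt11Aux

/-- copy of the defining set of `boundedStableWidth` -/
def widthSet (X : Type*) [NormedAddCommGroup X] (K : Set X) (n : ℕ) (γ β : ℝ) : Set ℝ :=
  { d | ∃ (nrm : (Fin n → ℝ) → ℝ) (a : X → Fin n → ℝ) (M : (Fin n → ℝ) → X),
    IsNorm nrm ∧
    (∀ f ∈ K, nrm (a f) ≤ γ * ‖f‖) ∧
    (∀ x y, ‖M x - M y‖ ≤ γ * nrm (x - y) ^ β + ⨆ f : K, ‖(f : X) - M (a (f : X))‖) ∧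
    d = ⨆ f : K, ‖(f : X) - M (a (f : X))‖ }

theorem boundedStableWidth_eq (X : Type*) [NormedAddCommGroup X] (K : Set X) (n : ℕ) (γ β : ℝ) :
    boundedStableWidth X K n γ β = sInf (widthSet X K n γ β) := rfl

theorem widthSet_nonempty (X : Type*) [NormedAddCommGroup X] (K : Set X) (n : ℕ) (γ β : ℝ)
    (hγ : 0 < γ) : (widthSet X K n γ β).Nonempty := by
  refine ⟨_, fun x => ‖x‖, fun _ => 0, fun _ => 0, ?_, ?_, ?_, rfl⟩
  · exact ⟨fun x => norm_nonneg x, fun x hx => norm_eq_zero.mp hx,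
      fun c x => by show ‖c • x‖ = |c| * ‖x‖; rw [norm_smul, Real.norm_eq_abs], fun x y => norm_add_le x y⟩
  · intro f _
    simp only [norm_zero]
    positivity
  · intro x y
    have h1 : 0 ≤ γ * ‖x - y‖ ^ β := by positivity
    have h2 : (0:ℝ) ≤ ⨆ f : K, ‖(f : X) - (0:X)‖ := Real.iSup_nonneg fun f => norm_nonneg _
    simp only [sub_self, norm_zero]
    linarith

theorem widthSet_nonneg {X : Type*} [NormedAddCommGroup X] {K : Set X} {n : ℕ} {γ β : ℝ}
    {d : ℝ} (hd : d ∈ widthSet X K n γ β) : 0 ≤ d := by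
  obtain ⟨nrm, a, M, _, _, _, rfl⟩ := hd
  exact Real.iSup_nonneg fun f => norm_nonneg _

theorem boundedStableWidth_nonneg (X : Type*) [NormedAddCommGroup X] (K : Set X) (n : ℕ)
    (γ β : ℝ) : 0 ≤ boundedStableWidth X K n γ β := by
  rw [boundedStableWidth_eq]
  exact Real.sInf_nonneg fun d hd => widthSet_nonneg hd

end Stmt11Aux

open Stmt11Aux in
set_option maxHeartbeats 1600000 in
theorem stmt11' {X : Type*} [NormedAddCommGroup X] (r γ β : ℝ)
    (hr : 0 < r) (hγ : 0 < γ) (hβ : 0 < β) (K : Set X) (hK : IsCompact K) :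
    ∃ c : ℝ, 0 < c ∧ ∀ n : ℕ, 3 ≤ n → ∀ Λ : ℝ,
      (∀ m : ℕ, ((m : ℝ) + 1) ^ r * boundedStableWidth X K m γ β ≤ Λ) →
      entropyNumber X K ⌈c * n * Real.log n⌉₊ ≤ ((n : ℝ) + 1) ^ (-r) * Λ := by
  classical
  have hentro_bddBelow : ∀ N : ℕ, BddBelow { ε : ℝ | 0 < ε ∧ ∃ T : Finset X,
      T.card ≤ 2 ^ N ∧ K ⊆ ⋃ c ∈ T, closedBall c ε } :=
    fun N => ⟨0, fun x hx => hx.1.le⟩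
  by_cases hsing : ∀ f ∈ K, ∀ g ∈ K, f = g
  · -- K has at most one point
    refine ⟨1, one_pos, fun n hn Λ hΛ => ?_⟩
    have hw0 := hΛ 0
    simp only [Nat.cast_zero, zero_add, Real.one_rpow, one_mul] at hw0
    have hΛ0 : 0 ≤ Λ := (boundedStableWidth_nonneg X K 0 γ β).trans hw0
    have hrhs : 0 ≤ ((n:ℝ) + 1) ^ (-r) * Λ :=
      mul_nonneg (Real.rpow_nonneg (by positivity) _) hΛ0
    set N := ⌈(1:ℝ) * n * Real.log n⌉₊ with hN
    clear_value N
    have hent : ∀ ε : ℝ, 0 < ε → entropyNumber X K N ≤ ε := by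
      intro ε hε
      apply csInf_le (hentro_bddBelow N)
      rcases K.eq_empty_or_nonempty with hKe | ⟨f₀, hf₀⟩
      · exact ⟨hε, ∅, by simp, by rw [hKe]; exact Set.empty_subset _⟩
      · refine ⟨hε, {f₀}, by simpa using Nat.one_le_two_pow, ?_⟩
        intro f hf
        have hfe : f = f₀ := hsing f hf f₀ hf₀
        subst hfe
        simp only [Finset.mem_singleton, Set.iUnion_iUnion_eq_left]
        exact mem_closedBall_self hε.le
    have hle0 : entropyNumber X K N ≤ 0 := by
      by_contra hcon
      push_neg at hcon
      have := hent (entropyNumber X K N / 2) (by linarith)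
      linarith
    linarith
  · -- K has two distinct points
    push_neg at hsing
    obtain ⟨f₁, hf₁, f₂, hf₂, hne⟩ := hsing
    have hbddn : BddAbove (norm '' K) := (hK.image continuous_norm).bddAbove
    set C₀ : ℝ := sSup (norm '' K) with hC₀def
    clear_value C₀
    have hC₀ : ∀ f ∈ K, ‖f‖ ≤ C₀ := fun f hf => by rw [hC₀def]; exact le_csSup hbddn ⟨f, hf, rfl⟩
    set Λ₀ : ℝ := ‖f₁ - f₂‖ / 2 with hΛ₀def
    clear_value Λ₀
    have hΛ₀pos : 0 < Λ₀ := by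
      have : 0 < ‖f₁ - f₂‖ := norm_pos_iff.mpr (sub_ne_zero.mpr hne)
      rw [hΛ₀def]; linarith
    have hC₀pos : 0 < C₀ := by
      have h1 := hC₀ f₁ hf₁
      have h2 := hC₀ f₂ hf₂
      have h3 : ‖f₁ - f₂‖ ≤ ‖f₁‖ + ‖f₂‖ := norm_sub_le f₁ f₂
      have h4 : 0 < ‖f₁ - f₂‖ := norm_pos_iff.mpr (sub_ne_zero.mpr hne)
      linarith
    set q : ℕ := ⌈(4:ℝ) ^ r⁻¹⌉₊ with hqdef
    have hq1 : 1 ≤ q := Nat.one_le_ceil_iff.mpr (by positivity)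
    have hqR : (0:ℝ) < q := by exact_mod_cast hq1
    have hq4 : (4:ℝ) ^ r⁻¹ ≤ q := Nat.le_ceil _
    set R : ℝ := γ * C₀ with hRdef
    clear_value R
    have hRpos : 0 < R := by rw [hRdef]; exact mul_pos hγ hC₀pos
    set D₀ : ℝ := 4 * γ * (4 * R) ^ β / Λ₀ with hD₀def
    clear_value D₀
    have h4Rpow : (0:ℝ) < (4 * R) ^ β := Real.rpow_pos_of_pos (by linarith) β
    have hD₀pos : 0 < D₀ := by rw [hD₀def]; exact div_pos (mul_pos (by linarith) h4Rpow) hΛ₀pos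
    set L₀ : ℝ := max (Real.logb 2 D₀) 0 with hL₀def
    clear_value L₀
    have hL₀0 : 0 ≤ L₀ := by rw [hL₀def]; exact le_max_right _ _
    have hL₀D : Real.logb 2 D₀ ≤ L₀ := by rw [hL₀def]; exact le_max_left _ _
    have hcA : (0:ℝ) ≤ (L₀ + 3 * r) / β := div_nonneg (by linarith) hβ.le
    have hcpos : (0:ℝ) < 2 * q * ((L₀ + 3 * r) / β + 2) :=
      mul_pos (by linarith) (by linarith)
    refine ⟨2 * q * ((L₀ + 3 * r) / β + 2), hcpos, fun n hn Λ hΛ => ?_⟩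
    set c : ℝ := 2 * q * ((L₀ + 3 * r) / β + 2) with hcdef
    clear_value c
    -- basic facts about n
    have hn3 : (3:ℝ) ≤ (n:ℝ) := by exact_mod_cast hn
    have hnpos : (0:ℝ) < n := by linarith
    have hlog3 : (1:ℝ) ≤ Real.log 3 := by
      rw [Real.le_log_iff_exp_le (by norm_num)]
      linarith [Real.exp_one_lt_d9]
    have hln : (1:ℝ) ≤ Real.log n := by
      refine hlog3.trans (Real.log_le_log (by norm_num) hn3)
    have hlnpos : (0:ℝ) < Real.log n := by linarith
    -- Λ ≥ Λ₀ > 0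
    have hΛΛ₀ : Λ₀ ≤ Λ := by
      have hw0 := hΛ 0
      simp only [Nat.cast_zero, zero_add, Real.one_rpow, one_mul] at hw0
      refine le_trans ?_ hw0
      rw [boundedStableWidth_eq]
      refine le_csInf (widthSet_nonempty X K 0 γ β hγ) ?_
      rintro d ⟨nrm, a, M, hnorm, ha, hM, rfl⟩
      set g : X := M (a f₁) with hgdef
      have hMconst : ∀ f : X, M (a f) = g := fun f => congrArg M (Subsingleton.elim _ _)
      have hbdd : BddAbove (Set.range fun f : K => ‖(f : X) - M (a (f : X))‖) := by
        refine ⟨C₀ + ‖g‖, ?_⟩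
        rintro x ⟨f, rfl⟩
        show ‖(f : X) - M (a (f : X))‖ ≤ C₀ + ‖g‖
        rw [hMconst]
        calc ‖(f : X) - g‖ ≤ ‖(f : X)‖ + ‖g‖ := norm_sub_le _ _
          _ ≤ C₀ + ‖g‖ := by have := hC₀ f f.2; linarith
      have h₁ : ‖f₁ - g‖ ≤ ⨆ f : K, ‖(f : X) - M (a (f : X))‖ := by
        have := le_ciSup hbdd (⟨f₁, hf₁⟩ : K)
        simpa [hMconst] using this
      have h₂ : ‖f₂ - g‖ ≤ ⨆ f : K, ‖(f : X) - M (a (f : X))‖ := by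
        have := le_ciSup hbdd (⟨f₂, hf₂⟩ : K)
        simpa [hMconst] using this
      have htri : ‖f₁ - f₂‖ ≤ ‖f₁ - g‖ + ‖f₂ - g‖ := by
        have h3 : f₁ - f₂ = (f₁ - g) - (f₂ - g) := by abel
        rw [h3]
        exact norm_sub_le _ _
      rw [hΛ₀def]
      linarith
    have hΛpos : 0 < Λ := lt_of_lt_of_le hΛ₀pos hΛΛ₀
    set t : ℝ := ((n:ℝ) + 1) ^ (-r) * Λ with htdef
    clear_value t
    have hnp1pos : (0:ℝ) < (n:ℝ) + 1 := by linarith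
    have hwpos : (0:ℝ) < ((n:ℝ) + 1) ^ (-r) := Real.rpow_pos_of_pos hnp1pos _
    have htpos : 0 < t := by rw [htdef]; exact mul_pos hwpos hΛpos
    set N : ℕ := ⌈c * n * Real.log n⌉₊ with hNdef
    clear_value N
    set mm : ℕ := q * (n + 1) with hmmdef
    clear_value mm
    have hmmpos : 0 < mm := by rw [hmmdef]; exact Nat.mul_pos hq1 (Nat.succ_pos n)
    have hmmR : (0:ℝ) < mm := by exact_mod_cast hmmpos
    set s : ℕ := N / mm with hsdef
    clear_value s
    -- lower bound for s
    have hNlow : c * n * Real.log n ≤ (N:ℝ) := by rw [hNdef]; exact Nat.le_ceil _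
    have hNup : (N:ℝ) < (mm:ℝ) * ((s:ℝ) + 1) := by
      have h1 : N < mm * (s + 1) := by
        have h2 := Nat.div_add_mod N mm
        have h3 := Nat.mod_lt N hmmpos
        rw [hsdef, Nat.mul_succ]
        omega
      exact_mod_cast h1
    have hmmle : (mm:ℝ) ≤ 2 * q * n := by
      have h1 : ((n:ℝ) + 1) ≤ 2 * n := by linarith
      calc (mm:ℝ) = q * ((n:ℝ) + 1) := by rw [hmmdef]; push_cast; ring
        _ ≤ q * (2 * n) := mul_le_mul_of_nonneg_left h1 hqR.le
        _ = 2 * q * n := by ring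
    have hccomp : c * Real.log n / (2 * q) = ((L₀ + 3 * r) / β + 2) * Real.log n := by
      rw [hcdef]; field_simp [hβ.ne', hqR.ne']
    have hsge : (L₀ + 3 * r * Real.log n) / β + 1 ≤ (s:ℝ) := by
      have hstep1 : (N:ℝ) / mm < (s:ℝ) + 1 := by
        rw [div_lt_iff₀ hmmR]; linarith [hNup]
      have hstep2 : c * Real.log n / (2 * q) ≤ (N:ℝ) / mm := by
        rw [div_le_div_iff₀ (by linarith [hqR] : (0:ℝ) < 2 * q) hmmR]
        have h0 : 0 ≤ c * Real.log n := mul_nonneg hcpos.le hlnpos.le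
        have h1 : c * Real.log n * mm ≤ c * Real.log n * (2 * q * n) :=
          mul_le_mul_of_nonneg_left hmmle h0
        have h2 : c * Real.log n * (2 * q * n) = (c * n * Real.log n) * (2 * q) := by ring
        have h3 : (c * n * Real.log n) * (2 * q) ≤ (N:ℝ) * (2 * q) :=
          mul_le_mul_of_nonneg_right hNlow (by linarith)
        linarith
      have hstep3 : (L₀ + 3 * r * Real.log n) / β + 2 ≤ c * Real.log n / (2 * q) := by
        rw [hccomp]
        have hkey : (L₀ + 3 * r * Real.log n) / β ≤ (L₀ + 3 * r) / β * Real.log n := by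
          rw [div_le_iff₀ hβ]
          have h5 : (L₀ + 3 * r) / β * Real.log n * β = (L₀ + 3 * r) * Real.log n := by
            field_simp
          rw [h5]
          have hx : (L₀ + 3 * r) * Real.log n = L₀ * Real.log n + 3 * r * Real.log n := by ring
          have hy : L₀ * 1 ≤ L₀ * Real.log n := mul_le_mul_of_nonneg_left hln hL₀0
          linarith
        rw [add_mul]
        have h6 : (2:ℝ) ≤ 2 * Real.log n := by linarith
        linarith
      linarith
    have hs1R : (1:ℝ) ≤ (s:ℝ) := by
      have hfrac : 0 ≤ (L₀ + 3 * r * Real.log n) / β := by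
        apply div_nonneg _ hβ.le
        have : 0 ≤ 3 * r * Real.log n := by positivity
        linarith
      linarith
    have hs1 : 1 ≤ s := by exact_mod_cast hs1R
    -- width at dimension mm
    set δm : ℝ := boundedStableWidth X K mm γ β with hδmdef
    clear_value δm
    have hδm : ((mm:ℝ) + 1) ^ r * δm ≤ Λ := by rw [hδmdef]; exact hΛ mm
    have hmm1R : (0:ℝ) < (mm:ℝ) + 1 := by linarith
    have hpow4 : 4 * ((n:ℝ) + 1) ^ r ≤ ((mm:ℝ) + 1) ^ r := by
      have h1 : (4:ℝ) ^ r⁻¹ * ((n:ℝ) + 1) ≤ (mm:ℝ) + 1 := by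
        have h2 : (mm:ℝ) = q * ((n:ℝ) + 1) := by rw [hmmdef]; push_cast; ring
        have h2' : (4:ℝ) ^ r⁻¹ * ((n:ℝ) + 1) ≤ (q:ℝ) * ((n:ℝ) + 1) :=
          mul_le_mul_of_nonneg_right hq4 hnp1pos.le
        linarith
      have h3 : ((4:ℝ) ^ r⁻¹ * ((n:ℝ) + 1)) ^ r ≤ ((mm:ℝ) + 1) ^ r :=
        Real.rpow_le_rpow (by positivity) h1 hr.le
      have h4 : ((4:ℝ) ^ r⁻¹ * ((n:ℝ) + 1)) ^ r = 4 * ((n:ℝ) + 1) ^ r := by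
        rw [Real.mul_rpow (by positivity) (by positivity), ← Real.rpow_mul (by norm_num : (0:ℝ) ≤ 4),
          inv_mul_cancel₀ hr.ne', Real.rpow_one]
      linarith
    have hδmle : δm ≤ t / 4 := by
      have hpos1 : (0:ℝ) < ((mm:ℝ) + 1) ^ r := Real.rpow_pos_of_pos hmm1R r
      have hpos2 : (0:ℝ) < ((n:ℝ) + 1) ^ r := Real.rpow_pos_of_pos hnp1pos r
      have h1 : δm ≤ Λ / ((mm:ℝ) + 1) ^ r := by
        rw [le_div_iff₀ hpos1]; linarith [hδm]
      have h2 : Λ / ((mm:ℝ) + 1) ^ r ≤ Λ / (4 * ((n:ℝ) + 1) ^ r) := by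
        rw [div_le_div_iff₀ hpos1 (by positivity)]
        linarith [mul_le_mul_of_nonneg_left hpow4 hΛpos.le]
      have h3 : t / 4 = Λ / (4 * ((n:ℝ) + 1) ^ r) := by
        rw [htdef, Real.rpow_neg hnp1pos.le]
        field_simp
      linarith
    -- get a near-optimal scheme
    set η : ℝ := t / 8 with hηdef
    clear_value η
    have hηpos : 0 < η := by rw [hηdef]; linarith
    obtain ⟨E, hEmem, hElt⟩ :=
      Real.lt_sInf_add_pos (widthSet_nonempty X K mm γ β hγ) hηpos
    rw [← boundedStableWidth_eq, ← hδmdef] at hElt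
    obtain ⟨nrm, a, M, hnorm, ha, hM, hEeq⟩ := hEmem
    have hE0 : 0 ≤ E := by
      rw [hEeq]; exact Real.iSup_nonneg fun f => norm_nonneg _
    have haR : ∀ f ∈ K, nrm (a f) ≤ R := by
      intro f hf
      refine (ha f hf).trans ?_
      rw [hRdef]
      exact mul_le_mul_of_nonneg_left (hC₀ f hf) hγ.le
    have hbddE : BddAbove (Set.range fun f : K => ‖(f : X) - M (a (f : X))‖) := by
      refine ⟨C₀ + (γ * R ^ β + (⨆ f : K, ‖(f : X) - M (a (f : X))‖)) + ‖M 0‖, ?_⟩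
      rintro x ⟨f, rfl⟩
      show ‖(f : X) - M (a (f : X))‖ ≤ _
      have h1 : ‖(f : X) - M (a (f : X))‖ ≤ ‖(f : X)‖ + ‖M (a (f : X))‖ := norm_sub_le _ _
      have h2 : ‖M (a (f : X))‖ ≤ ‖M (a (f : X)) - M 0‖ + ‖M 0‖ := by
        have h2' : M (a (f : X)) = (M (a (f : X)) - M 0) + M 0 := by abel
        calc ‖M (a (f : X))‖ = ‖(M (a (f : X)) - M 0) + M 0‖ := by rw [← h2']
          _ ≤ ‖M (a (f : X)) - M 0‖ + ‖M 0‖ := norm_add_le _ _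
      have h3 := hM (a (f : X)) 0
      rw [sub_zero] at h3
      have h4 : nrm (a (f : X)) ^ β ≤ R ^ β :=
        Real.rpow_le_rpow (hnorm.1 _) (haR (f : X) f.2) hβ.le
      have h5 : γ * nrm (a (f : X)) ^ β ≤ γ * R ^ β := mul_le_mul_of_nonneg_left h4 hγ.le
      have h6 := hC₀ (f : X) f.2
      linarith
    have hEub : ∀ f : K, ‖(f : X) - M (a (f : X))‖ ≤ E := by
      intro f
      rw [hEeq]
      exact le_ciSup hbddE f
    -- the net
    set u : ℝ := (2:ℝ) ^ (s:ℝ) with hudef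
    clear_value u
    have hu2 : (2:ℝ) ≤ u := by
      rw [hudef]
      calc (2:ℝ) = 2 ^ (1:ℝ) := (Real.rpow_one 2).symm
        _ ≤ 2 ^ (s:ℝ) := Real.rpow_le_rpow_of_exponent_le one_le_two hs1R
    have hupos : (0:ℝ) < u := by linarith
    set εhat : ℝ := 4 * R / u with hεdef
    clear_value εhat
    have hεpos : 0 < εhat := by rw [hεdef]; exact div_pos (by linarith) hupos
    obtain ⟨P, hPcard, hPnet⟩ := exists_net hmmpos hnorm hRpos hεpos
    have hcount : (P.card : ℝ) ≤ (2:ℝ) ^ N := by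
      have h1 : 1 + 2 * R / εhat = 1 + u / 2 := by
        rw [hεdef]
        field_simp
        ring
      have h2 : 1 + u / 2 ≤ u := by linarith
      have h3 : (1 + 2 * R / εhat) ^ mm ≤ u ^ mm := by
        rw [h1]; exact pow_le_pow_left₀ (by linarith) h2 mm
      have h4 : u ^ mm = (2:ℝ) ^ (s * mm) := by
        rw [hudef, Real.rpow_natCast, ← pow_mul]
      have h5 : (2:ℝ) ^ (s * mm) ≤ (2:ℝ) ^ N := by
        apply pow_le_pow_right₀ one_le_two
        rw [hsdef]
        exact Nat.div_mul_le_self N mm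
      calc (P.card : ℝ) ≤ (1 + 2 * R / εhat) ^ mm := hPcard
        _ ≤ u ^ mm := h3
        _ = (2:ℝ) ^ (s * mm) := h4
        _ ≤ (2:ℝ) ^ N := h5
    have hPcard' : P.card ≤ 2 ^ N := by exact_mod_cast hcount
    -- the covering
    set ρ : ℝ := γ * εhat ^ β + 2 * E with hρdef
    clear_value ρ
    have hρpos : 0 < ρ := by
      have : 0 < γ * εhat ^ β := mul_pos hγ (Real.rpow_pos_of_pos hεpos β)
      rw [hρdef]; linarith
    have hcover : K ⊆ ⋃ x ∈ P.image M, closedBall x ρ := by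
      intro f hf
      obtain ⟨p, hpP, hpnear⟩ := hPnet (a f) (haR f hf)
      have h1 : ‖f - M (a f)‖ ≤ E := hEub ⟨f, hf⟩
      have h2 : ‖M (a f) - M p‖ ≤ γ * nrm (a f - p) ^ β + E := by
        have h2' := hM (a f) p
        rw [← hEeq] at h2'
        exact h2'
      have h3 : nrm (a f - p) ^ β ≤ εhat ^ β :=
        Real.rpow_le_rpow (hnorm.1 _) hpnear hβ.le
      have h4 : ‖f - M p‖ ≤ ‖f - M (a f)‖ + ‖M (a f) - M p‖ := by
        have h4' : f - M p = (f - M (a f)) + (M (a f) - M p) := by abel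
        rw [h4']
        exact norm_add_le _ _
      have h5 : γ * nrm (a f - p) ^ β ≤ γ * εhat ^ β := mul_le_mul_of_nonneg_left h3 hγ.le
      have hf' : ‖f - M p‖ ≤ ρ := by rw [hρdef]; linarith
      refine Set.mem_iUnion₂.mpr ⟨M p, Finset.mem_image_of_mem M hpP, ?_⟩
      rw [mem_closedBall, dist_eq_norm]
      exact hf'
    have hentle : entropyNumber X K N ≤ ρ :=
      csInf_le (hentro_bddBelow N)
        ⟨hρpos, P.image M, le_trans Finset.card_image_le hPcard', hcover⟩
    -- first term bound
    have hfirst : γ * εhat ^ β ≤ t / 4 := by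
      have hεeq : εhat ^ β = (4 * R) ^ β * (2:ℝ) ^ (-(s:ℝ) * β) := by
        rw [hεdef, div_eq_mul_inv, Real.mul_rpow (by linarith) (by positivity)]
        congr 1
        rw [hudef, ← Real.rpow_neg (by norm_num : (0:ℝ) ≤ 2),
          ← Real.rpow_mul (by norm_num : (0:ℝ) ≤ 2)]
      have hlogb : Real.logb 2 ((n:ℝ) + 1) ≤ 3 * Real.log n := by
        have hlog2 : (1:ℝ)/2 ≤ Real.log 2 := by linarith [Real.log_two_gt_d9]
        have hlog2pos : (0:ℝ) < Real.log 2 := by linarith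
        rw [Real.logb, div_le_iff₀ hlog2pos]
        have h4 : Real.log ((n:ℝ) + 1) ≤ Real.log (2 * n) :=
          Real.log_le_log (by linarith) (by linarith)
        have h5 : Real.log (2 * (n:ℝ)) = Real.log 2 + Real.log n :=
          Real.log_mul (by norm_num) (by linarith)
        rw [h5] at h4
        have p1 : 0 ≤ (2 * Real.log 2 - 1) * (Real.log n - 1) :=
          mul_nonneg (by linarith) (by linarith)
        have p2 : 0 ≤ Real.log 2 * (Real.log n - 1) :=
          mul_nonneg (by linarith) (by linarith)
        linarith [p1, p2, h4]
      have hsβ : L₀ + r * Real.logb 2 ((n:ℝ) + 1) ≤ (s:ℝ) * β := by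
        have h1 : ((L₀ + 3 * r * Real.log n) / β + 1) * β ≤ (s:ℝ) * β :=
          mul_le_mul_of_nonneg_right hsge hβ.le
        have h2 : ((L₀ + 3 * r * Real.log n) / β + 1) * β = L₀ + 3 * r * Real.log n + β := by
          field_simp
        have h3 : r * Real.logb 2 ((n:ℝ) + 1) ≤ 3 * r * Real.log n := by
          have := mul_le_mul_of_nonneg_left hlogb hr.le
          linarith
        linarith
      have h2exp : (2:ℝ) ^ (-(s:ℝ) * β) ≤ (2:ℝ) ^ (-(L₀ + r * Real.logb 2 ((n:ℝ) + 1))) :=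
        Real.rpow_le_rpow_of_exponent_le one_le_two (by linarith [hsβ])
      have hsplit : (2:ℝ) ^ (-(L₀ + r * Real.logb 2 ((n:ℝ) + 1)))
          = (2:ℝ) ^ (-L₀) * ((n:ℝ) + 1) ^ (-r) := by
        rw [neg_add, Real.rpow_add two_pos]
        congr 1
        rw [show -(r * Real.logb 2 ((n:ℝ) + 1)) = Real.logb 2 ((n:ℝ) + 1) * (-r) by ring,
          Real.rpow_mul (by norm_num : (0:ℝ) ≤ 2),
          Real.rpow_logb two_pos (by norm_num) hnp1pos]
      have hL₀bound : (2:ℝ) ^ (-L₀) ≤ D₀⁻¹ := by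
        have h7 : (2:ℝ) ^ (-L₀) ≤ (2:ℝ) ^ (-Real.logb 2 D₀) :=
          Real.rpow_le_rpow_of_exponent_le one_le_two (by linarith [hL₀D])
        have h6 : (2:ℝ) ^ (-Real.logb 2 D₀) = D₀⁻¹ := by
          rw [Real.rpow_neg (by norm_num : (0:ℝ) ≤ 2),
            Real.rpow_logb two_pos (by norm_num) hD₀pos]
        rw [h6] at h7
        exact h7
      have hD₀inv : γ * (4 * R) ^ β * D₀⁻¹ = Λ₀ / 4 := by
        rw [hD₀def]
        field_simp [hΛ₀pos.ne', hγ.ne', h4Rpow.ne']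
      have hchain : γ * εhat ^ β ≤ γ * (4 * R) ^ β * (D₀⁻¹ * ((n:ℝ) + 1) ^ (-r)) := by
        rw [hεeq, ← mul_assoc]
        have hA : (0:ℝ) ≤ γ * (4 * R) ^ β := by positivity
        have hB : (2:ℝ) ^ (-(s:ℝ) * β) ≤ D₀⁻¹ * ((n:ℝ) + 1) ^ (-r) := by
          calc (2:ℝ) ^ (-(s:ℝ) * β) ≤ (2:ℝ) ^ (-(L₀ + r * Real.logb 2 ((n:ℝ) + 1))) := h2exp
            _ = (2:ℝ) ^ (-L₀) * ((n:ℝ) + 1) ^ (-r) := hsplit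
            _ ≤ D₀⁻¹ * ((n:ℝ) + 1) ^ (-r) :=
              mul_le_mul_of_nonneg_right hL₀bound hwpos.le
        exact mul_le_mul_of_nonneg_left hB hA
      have hfin : γ * (4 * R) ^ β * (D₀⁻¹ * ((n:ℝ) + 1) ^ (-r)) = Λ₀ / 4 * ((n:ℝ) + 1) ^ (-r) := by
        rw [← mul_assoc, hD₀inv]
      have hlast : Λ₀ / 4 * ((n:ℝ) + 1) ^ (-r) ≤ t / 4 := by
        rw [htdef]
        have := mul_le_mul_of_nonneg_right hΛΛ₀ hwpos.le
        linarith
      calc γ * εhat ^ β ≤ γ * (4 * R) ^ β * (D₀⁻¹ * ((n:ℝ) + 1) ^ (-r)) := hchain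
        _ = Λ₀ / 4 * ((n:ℝ) + 1) ^ (-r) := hfin
        _ ≤ t / 4 := hlast
    -- conclude
    have hsecond : 2 * E ≤ t / 2 + t / 4 := by
      have h8 : E ≤ δm + η := hElt.le
      rw [hηdef] at h8
      linarith [hδmle]
    calc entropyNumber X K N ≤ ρ := hentle
      _ ≤ t := by rw [hρdef]; linarith [hfirst, hsecond]

/-- Carl-type inequality, with a logarithmic loss, for the bounded stable
manifold widths: there is c = c(r,β,γ,C₀(K)) such that for all n ≥ 3,
ε_{⌈c n ln n⌉}(K)_X ≤ (n+1)^{-r} · sup_{m≥0}(m+1)^r δ̃_{m,γ,β}(K)_X. -/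
theorem stmt11 {X : Type*} [NormedAddCommGroup X] (r γ β : ℝ)
    (hr : 0 < r) (hγ : 0 < γ) (hβ : 0 < β) (K : Set X) (hK : IsCompact K) :
    ∃ c : ℝ, 0 < c ∧ ∀ n : ℕ, 3 ≤ n → ∀ Λ : ℝ,
      (∀ m : ℕ, ((m : ℝ) + 1) ^ r * boundedStableWidth X K m γ β ≤ Λ) →
      entropyNumber X K ⌈c * n * Real.log n⌉₊ ≤ ((n : ℝ) + 1) ^ (-r) * Λ := by
  exact stmt11' r γ β hr hγ hβ K hK
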